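/- arXiv:2204.12239 — 4 statements merged into one kernel-verified Lean document; each statement's English description precedes it below -/
import Mathlib

section
/- Let d ≥ 3, r_h > 0, f₀ᵈ > 0, and let χ : [r_h, ∞) → ℝ be continuous, nonincreasing, nonnegative, with lim_{r→∞} χ(r) = 0. Suppose m : [r_h, ∞) → ℝ is continuous with 0 ≤ m(x) ≤ f₀ᵈ/2, and that 1 = 2 ∫_{r_h}^∞ (d·m(x) − X(x) − x^{d−2}) e^{-χ(x)/2} x^{-(d+1)} dx, where X(x) = (d−2) ∫_x^∞ (1 − e^{-χ(y)/2}) y^{d−3} dy. Then f₀ᵈ/r_hᵈ − 1/r_h² ≥ 1. -/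
open MeasureTheory Set Filter Real
open scoped Topology

lemma aux_dom {b : ℝ} {f g : ℝ → ℝ} (hf : ContinuousOn f (Ioi b))
    (hg : IntegrableOn g (Ioi b)) (hbd : ∀ x ∈ Ioi b, |f x| ≤ g x) :
    IntegrableOn f (Ioi b) := by
  refine Integrable.mono hg (hf.aestronglyMeasurable measurableSet_Ioi) ?_
  rw [ae_restrict_iff' measurableSet_Ioi]
  exact ae_of_all _ fun x hx => by
    simpa [Real.norm_eq_abs] using (hbd x hx).trans (le_abs_self _)

lemma aux_pow_int (k : ℕ) {b : ℝ} (hb : 0 < b) :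
    IntegrableOn (fun x : ℝ => 1 / x ^ (k + 2)) (Ioi b) := by
  have h := integrableOn_Ioi_rpow_of_lt (a := -((k : ℝ) + 2))
    (by have := Nat.cast_nonneg (α := ℝ) k; linarith) hb
  refine h.congr_fun (fun x hx => ?_) measurableSet_Ioi
  have hx0 : (0:ℝ) < x := hb.trans hx
  dsimp only
  rw [Real.rpow_neg hx0.le, ← Real.rpow_natCast x (k+2)]
  push_cast
  rw [one_div]

lemma aux_pow_val (k : ℕ) {b : ℝ} (hb : 0 < b) :
    ∫ x in Ioi b, 1 / x ^ (k + 2) = 1 / ((k + 1) * b ^ (k + 1)) := by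
  have h := integral_Ioi_rpow_of_lt (a := -((k : ℝ) + 2))
    (by have := Nat.cast_nonneg (α := ℝ) k; linarith) hb
  have e1 : ∫ x in Ioi b, 1 / x ^ (k + 2) = ∫ x in Ioi b, x ^ (-((k : ℝ) + 2)) := by
    refine setIntegral_congr_fun measurableSet_Ioi (fun x hx => ?_)
    have hx0 : (0:ℝ) < x := hb.trans hx
    rw [Real.rpow_neg hx0.le, ← Real.rpow_natCast x (k+2)]
    push_cast
    rw [one_div]
  rw [e1, h]
  have h0 : -((k : ℝ) + 2) + 1 = -((k : ℝ) + 1) := by ring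
  have hb1 : b ^ ((k:ℝ)+1) = b ^ (k+1 : ℕ) := by
    rw [← Real.rpow_natCast b (k+1)]; push_cast; ring_nf
  rw [h0, Real.rpow_neg hb.le, hb1]
  have h1 : ((k:ℝ)+1) ≠ 0 := by positivity
  have h2 : b ^ (k+1 : ℕ) ≠ 0 := by positivity
  have h3 : (-1 + -(k:ℝ)) ≠ 0 := by intro h; have := Nat.cast_nonneg (α := ℝ) k; linarith
  field_simp [h3]

set_option maxHeartbeats 2000000 in
theorem stmt_3 (d : ℕ) (hd : 3 ≤ d) (r_h f0d : ℝ) (hrh : 0 < r_h) (hf0 : 0 < f0d)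
    (χ m : ℝ → ℝ)
    (hχ_cont : ContinuousOn χ (Set.Ici r_h)) (hχ_anti : AntitoneOn χ (Set.Ici r_h))
    (hχ_nonneg : ∀ x, r_h ≤ x → 0 ≤ χ x)
    (hχ_lim : Filter.Tendsto χ Filter.atTop (nhds 0))
    (hm_cont : ContinuousOn m (Set.Ici r_h))
    (hm_bd : ∀ x, r_h ≤ x → 0 ≤ m x ∧ m x ≤ f0d / 2)
    (X : ℝ → ℝ)
    (hX : ∀ x, X x = ((d : ℝ) - 2) * ∫ y in Set.Ioi x, (1 - Real.exp (-χ y / 2)) * y ^ (d - 3))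
    (hnorm : 1 = 2 * ∫ x in Set.Ioi r_h,
        (d * m x - X x - x ^ (d - 2)) * Real.exp (-χ x / 2) / x ^ (d + 1)) :
    f0d / r_h ^ d - 1 / r_h ^ 2 ≥ 1 := by
  obtain ⟨e, rfl⟩ : ∃ e, d = e + 3 := ⟨d - 3, by omega⟩
  have hde2 : e + 3 - 2 = e + 1 := by omega
  have hde3 : e + 3 - 3 = e := by omega
  have hde4 : e + 3 + 1 = e + 4 := by omega
  set u : ℝ → ℝ := fun x => Real.exp (-χ (max x r_h) / 2) with hu_def
  have hmaxmem : ∀ x : ℝ, r_h ≤ max x r_h := fun x => le_max_right _ _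
  have hχmax_cont : Continuous fun x : ℝ => χ (max x r_h) :=
    hχ_cont.comp_continuous (continuous_id.max continuous_const) hmaxmem
  have hu_cont : Continuous u := Real.continuous_exp.comp ((hχmax_cont.neg).div_const 2)
  have hu_pos : ∀ x, 0 < u x := fun x => Real.exp_pos _
  have hu_le1 : ∀ x, u x ≤ 1 := fun x => Real.exp_le_one_iff.2 (by
    have := hχ_nonneg _ (hmaxmem x); linarith)
  have hu_mono : Monotone u := by
    intro x y hxy
    have h := hχ_anti (hmaxmem x) (hmaxmem y) (max_le_max hxy le_rfl)
    exact Real.exp_le_exp.2 (by linarith)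
  have hu_eq : ∀ ⦃x⦄, r_h ≤ x → u x = Real.exp (-χ x / 2) := by
    intro x hx; simp only [hu_def, max_eq_left hx]
  set G : ℝ → ℝ := fun y => (1 - u y) * y ^ e with hG_def
  have hG_cont : Continuous G := (continuous_const.sub hu_cont).mul (continuous_pow e)
  have hG_nonneg : ∀ y, r_h ≤ y → 0 ≤ G y := fun y hy =>
    mul_nonneg (by linarith [hu_le1 y]) (pow_nonneg (hrh.le.trans hy) e)
  have hXG : ∀ ⦃x⦄, r_h ≤ x → X x = ((e : ℝ) + 1) * ∫ y in Set.Ioi x, G y := by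
    intro x hx
    rw [hX x]
    have h1 : ((e + 3 : ℕ) : ℝ) - 2 = (e : ℝ) + 1 := by push_cast; ring
    rw [h1]
    congr 1
    refine setIntegral_congr_fun measurableSet_Ioi (fun y hy => ?_)
    have hyr : r_h ≤ y := (hx.trans_lt hy).le
    simp only [hG_def, hde3, hu_eq hyr]
  -- basic integrable power functions
  have hpow3 : IntegrableOn (fun x : ℝ => 1 / x ^ 3) (Ioi r_h) := by
    simpa using aux_pow_int 1 hrh
  have hpow4 : IntegrableOn (fun x : ℝ => 1 / x ^ (e + 4)) (Ioi r_h) := by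
    simpa [show e + 2 + 2 = e + 4 from by omega] using aux_pow_int (e + 2) hrh
  have hpow25 : IntegrableOn (fun x : ℝ => 1 / x ^ (2 * e + 5)) (Ioi r_h) := by
    simpa [show 2 * e + 3 + 2 = 2 * e + 5 from by omega] using aux_pow_int (2 * e + 3) hrh
  have hval3 : ∫ x in Ioi r_h, 1 / x ^ 3 = 1 / (2 * r_h ^ 2) := by
    rw [show (3:ℕ) = 1 + 2 from rfl, aux_pow_val 1 hrh]; norm_num
  have hval4 : ∫ x in Ioi r_h, 1 / x ^ (e + 4) = 1 / (((e : ℝ) + 3) * r_h ^ (e + 3)) := by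
    have := aux_pow_val (e + 2) hrh
    rw [show e + 2 + 2 = e + 4 from by omega, show e + 2 + 1 = e + 3 from by omega] at this
    rw [this]; push_cast; ring_nf
  have hval25 : ∫ x in Ioi r_h, 1 / x ^ (2 * e + 5)
      = 1 / ((2 * (e : ℝ) + 4) * r_h ^ (2 * e + 4)) := by
    have := aux_pow_val (2 * e + 3) hrh
    rw [show 2 * e + 3 + 2 = 2 * e + 5 from by omega,
      show 2 * e + 3 + 1 = 2 * e + 4 from by omega] at this
    rw [this]; push_cast; ring_nf
  have hm_cont' : Continuous fun x : ℝ => m (max x r_h) :=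
    hm_cont.comp_continuous (continuous_id.max continuous_const) hmaxmem
  -- integrability of the basic pieces
  have hIu3 : IntegrableOn (fun x => u x / x ^ 3) (Ioi r_h) := by
    refine aux_dom (ContinuousOn.div hu_cont.continuousOn (continuous_pow 3).continuousOn
      (fun x hx => pow_ne_zero _ (hrh.trans hx).ne')) hpow3 (fun x hx => ?_)
    have hx0 : (0:ℝ) < x := hrh.trans hx
    rw [abs_of_nonneg (by positivity)]
    exact (div_le_div_iff_of_pos_right (by positivity)).2 (hu_le1 x)
  have hIu4 : IntegrableOn (fun x => u x / x ^ (e + 4)) (Ioi r_h) := by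
    refine aux_dom (ContinuousOn.div hu_cont.continuousOn (continuous_pow (e+4)).continuousOn
      (fun x hx => pow_ne_zero _ (hrh.trans hx).ne')) hpow4 (fun x hx => ?_)
    have hx0 : (0:ℝ) < x := hrh.trans hx
    rw [abs_of_nonneg (by positivity)]
    exact (div_le_div_iff_of_pos_right (by positivity)).2 (hu_le1 x)
  have hImint : IntegrableOn (fun x => m (max x r_h) * u x / x ^ (e + 4)) (Ioi r_h) := by
    refine aux_dom (ContinuousOn.div (hm_cont'.mul hu_cont).continuousOn
      (continuous_pow (e+4)).continuousOn
      (fun x hx => pow_ne_zero _ (hrh.trans hx).ne'))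
      (hpow4.const_mul (f0d / 2)) (fun x hx => ?_)
    have hx0 : (0:ℝ) < x := hrh.trans hx
    obtain ⟨hm0, hm1⟩ := hm_bd _ (hmaxmem x)
    have hu0 := (hu_pos x).le
    have hu1 := hu_le1 x
    have h1 : m (max x r_h) * u x ≤ f0d / 2 := by nlinarith
    rw [abs_of_nonneg (div_nonneg (mul_nonneg hm0 hu0) (by positivity))]
    calc m (max x r_h) * u x / x ^ (e+4) ≤ (f0d/2) / x ^ (e+4) :=
          (div_le_div_iff_of_pos_right (by positivity)).2 h1
      _ = f0d / 2 * (1 / x ^ (e+4)) := by ring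
  -- pointwise bound for the m-term
  have hmono_m : ∀ x ∈ Ioi r_h,
      m (max x r_h) * u x / x ^ (e + 4) ≤ f0d / 2 * (u x / x ^ (e + 4)) := by
    intro x hx
    have hx0 : (0:ℝ) < x := hrh.trans hx
    obtain ⟨hm0, hm1⟩ := hm_bd _ (hmaxmem x)
    have h1 : 0 ≤ u x / x ^ (e+4) := by positivity
    calc m (max x r_h) * u x / x ^ (e+4) = m (max x r_h) * (u x / x ^ (e+4)) := by ring
      _ ≤ f0d / 2 * (u x / x ^ (e+4)) := mul_le_mul_of_nonneg_right hm1 h1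
  by_cases hInt : IntegrableOn G (Ioi r_h) volume
  · -- main (convergent) case
    set K : ℝ := ∫ y in Ioi r_h, G y with hK_def
    have hK0 : 0 ≤ K := setIntegral_nonneg measurableSet_Ioi (fun y hy => hG_nonneg y hy.le)
    set V : ℝ → ℝ := fun x => ∫ y in r_h..x, G y with hV_def
    have hV_deriv : ∀ x : ℝ, HasDerivAt V (G x) x := fun x =>
      intervalIntegral.integral_hasDerivAt_right (hG_cont.intervalIntegrable _ _)
        hG_cont.stronglyMeasurable.stronglyMeasurableAtFilter hG_cont.continuousAt
    have hV_cont : Continuous V :=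
      continuous_iff_continuousAt.2 fun x => (hV_deriv x).continuousAt
    have hV0 : ∀ x, r_h ≤ x → 0 ≤ V x := by
      intro x hx
      rw [hV_def]
      simp only [intervalIntegral.integral_of_le hx]
      exact setIntegral_nonneg measurableSet_Ioc (fun y hy => hG_nonneg y hy.1.le)
    have hVK : ∀ x, r_h ≤ x → V x ≤ K := by
      intro x hx
      rw [hV_def, hK_def]
      simp only [intervalIntegral.integral_of_le hx]
      refine setIntegral_mono_set hInt ?_ ?_
      · exact (ae_restrict_iff' measurableSet_Ioi).2 (ae_of_all _ fun y hy => hG_nonneg y hy.le)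
      · exact HasSubset.Subset.eventuallyLE Ioc_subset_Ioi_self
    have hXVK : ∀ x, r_h ≤ x → X x = ((e:ℝ)+1) * (K - V x) := by
      intro x hx
      rw [hXG hx]
      congr 1
      have hsum : (∫ y in Ioc r_h x, G y) + (∫ y in Ioi x, G y) = K := by
        rw [hK_def, ← Ioc_union_Ioi_eq_Ioi hx]
        exact (setIntegral_union (Ioc_disjoint_Ioi le_rfl) measurableSet_Ioi
          (hInt.mono_set Ioc_subset_Ioi_self) (hInt.mono_set (Ioi_subset_Ioi hx))).symm
      have hVx : V x = ∫ y in Ioc r_h x, G y := intervalIntegral.integral_of_le hx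
      linarith [hsum, hVx]
    set P : ℝ → ℝ := fun x => x^(e+1) + ((e:ℝ)+1) * (K - V x) with hP_def
    set a : ℝ := r_h^(e+1) + ((e:ℝ)+1) * K with ha_def
    have hP_cont : Continuous P :=
      (continuous_pow (e+1)).add (continuous_const.mul (continuous_const.sub hV_cont))
    have hP_deriv : ∀ x : ℝ, HasDerivAt P (((e:ℝ)+1) * (u x * x^e)) x := by
      intro x
      have h1 := hasDerivAt_pow (e+1) x
      rw [Nat.add_sub_cancel] at h1
      have h2 : HasDerivAt (fun y => ((e:ℝ)+1) * (K - V y)) (((e:ℝ)+1) * (0 - G x)) x :=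
        ((hasDerivAt_const x K).sub (hV_deriv x)).const_mul _
      have h3 := h1.add h2
      rw [hP_def]
      refine h3.congr_deriv ?_
      simp only [hG_def]
      push_cast
      ring
    have hs_eq : ∀ x, r_h ≤ x → P x - a = ((e:ℝ)+1) * ∫ y in r_h..x, u y * y^e := by
      intro x hx
      have hiu : IntervalIntegrable (fun y => u y * y^e) volume r_h x :=
        ((hu_cont.mul (continuous_pow e)).intervalIntegrable _ _)
      have hig : IntervalIntegrable G volume r_h x := hG_cont.intervalIntegrable _ _
      have hsum : (∫ y in r_h..x, u y * y^e) + V x = ∫ y in r_h..x, (y^e : ℝ) := by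
        rw [hV_def]
        simp only [← intervalIntegral.integral_add hiu hig]
        refine intervalIntegral.integral_congr (fun y hy => ?_)
        simp only [hG_def]
        ring
      have hpowint : ∫ y in r_h..x, (y^e:ℝ) = (x^(e+1) - r_h^(e+1))/((e:ℝ)+1) := by
        rw [integral_pow]
        try push_cast
        try ring
      have h5 : (∫ y in r_h..x, u y * y^e) = (x^(e+1) - r_h^(e+1))/((e:ℝ)+1) - V x := by
        rw [← hpowint]; linarith [hsum]
      rw [h5]
      simp only [hP_def, ha_def]
      field_simp
      ring
    have hs0 : ∀ x, r_h ≤ x → 0 ≤ P x - a := by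
      intro x hx
      rw [hs_eq x hx]
      have h0 : 0 ≤ ∫ y in r_h..x, u y * y^e :=
        intervalIntegral.integral_nonneg hx
          (fun y hy => mul_nonneg (hu_pos y).le (pow_nonneg (hrh.le.trans hy.1) e))
      positivity
    have hPa_eq : ∀ x : ℝ, P x - a = x^(e+1) - r_h^(e+1) - ((e:ℝ)+1) * V x := by
      intro x; simp only [hP_def, ha_def]; ring
    have hsle : ∀ x, r_h ≤ x → P x - a ≤ x^(e+1) - r_h^(e+1) := by
      intro x hx
      have h1 := hPa_eq x
      have h2 := mul_nonneg (by positivity : (0:ℝ) ≤ (e:ℝ)+1) (hV0 x hx)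
      linarith
    have hts : ∀ x, r_h ≤ x → x^(e+1) - r_h^(e+1) - (P x - a) ≤ a - r_h^(e+1) := by
      intro x hx
      have h1 := hPa_eq x
      have h2 : a - r_h^(e+1) = ((e:ℝ)+1) * K := by rw [ha_def]; ring
      have h3 := mul_le_mul_of_nonneg_left (hVK x hx) (by positivity : (0:ℝ) ≤ (e:ℝ)+1)
      linarith
    have ha_pos : 0 < a := by
      rw [ha_def]
      have := pow_pos hrh (e+1)
      nlinarith [hK0]
    have hαnn : 0 ≤ a - r_h^(e+1) := by
      rw [ha_def]
      have := mul_nonneg (by positivity : (0:ℝ) ≤ (e:ℝ)+1) hK0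
      linarith
    have hP_ub : ∀ x, r_h ≤ x → P x ≤ x^(e+1) + a := by
      intro x hx
      have := hsle x hx
      have := pow_pos hrh (e+1)
      linarith
    -- integrability
    have hIP : IntegrableOn (fun x => P x * u x / x^(e+4)) (Ioi r_h) := by
      have hgi : IntegrableOn (fun x : ℝ => 1/x^3 + a*(1/x^(e+4))) (Ioi r_h) :=
        hpow3.add (hpow4.const_mul a)
      refine aux_dom (ContinuousOn.div ((hP_cont.mul hu_cont).continuousOn)
        (continuous_pow (e+4)).continuousOn
        (fun x hx => pow_ne_zero _ (hrh.trans hx).ne')) hgi ?_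
      intro x hx
      have hx0 : (0:ℝ) < x := hrh.trans hx
      have h0 : 0 ≤ P x := by linarith [hs0 x hx.le, ha_pos]
      have hub := hP_ub x hx.le
      have hu1 := hu_le1 x
      have hu0 := (hu_pos x).le
      rw [abs_of_nonneg (div_nonneg (mul_nonneg h0 hu0) (by positivity))]
      have step : P x * u x ≤ x^(e+1) + a := by nlinarith
      calc P x * u x / x^(e+4) ≤ (x^(e+1) + a)/x^(e+4) :=
            (div_le_div_iff_of_pos_right (by positivity)).2 step
        _ = 1/x^3 + a * (1/x^(e+4)) := by field_simp; ring
    have hIs1 : IntegrableOn (fun x => (P x - a)/x^(2*e+5)) (Ioi r_h) := by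
      refine aux_dom (ContinuousOn.div (hP_cont.sub continuous_const).continuousOn
        (continuous_pow (2*e+5)).continuousOn
        (fun x hx => pow_ne_zero _ (hrh.trans hx).ne')) hpow4 ?_
      intro x hx
      have hx0 : (0:ℝ) < x := hrh.trans hx
      have h0 := hs0 x hx.le
      have h1 := hsle x hx.le
      rw [abs_of_nonneg (div_nonneg h0 (by positivity))]
      rw [div_le_iff₀ (by positivity)]
      have hx1 : 1/x^(e+4) * x^(2*e+5) = x^(e+1) := by field_simp; ring
      rw [hx1]
      nlinarith [pow_pos hrh (e+1)]
    have hIs2 : IntegrableOn (fun x => (P x^2 - a^2)/x^(2*e+5)) (Ioi r_h) := by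
      have hgi2 : IntegrableOn (fun x : ℝ => 1/x^3 + (2*a)*(1/x^(e+4))) (Ioi r_h) :=
        hpow3.add (hpow4.const_mul (2*a))
      refine aux_dom (ContinuousOn.div ((hP_cont.pow 2).sub continuous_const).continuousOn
        (continuous_pow (2*e+5)).continuousOn
        (fun x hx => pow_ne_zero _ (hrh.trans hx).ne')) hgi2 ?_
      intro x hx
      have hx0 : (0:ℝ) < x := hrh.trans hx
      have h0 := hs0 x hx.le
      have h1 := hsle x hx.le
      have hub := hP_ub x hx.le
      have hβ := pow_pos hrh (e+1)
      have hnum0 : 0 ≤ P x^2 - a^2 := by nlinarith [ha_pos]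
      rw [abs_of_nonneg (div_nonneg hnum0 (by positivity))]
      rw [div_le_iff₀ (by positivity)]
      have hx1 : (1/x^3 + (2*a)*(1/x^(e+4))) * x^(2*e+5) = x^(e+1)*x^(e+1) + 2*a*x^(e+1) := by
        field_simp; ring
      rw [hx1]
      have hA : P x - a ≤ x^(e+1) := by linarith
      have hB : P x + a ≤ x^(e+1) + 2*a := by linarith
      have hC : (0:ℝ) ≤ x^(e+1) := by positivity
      nlinarith [mul_le_mul hA hB (by linarith : (0:ℝ) ≤ P x + a) hC]
    -- FTC identity 1
    set F1 : ℝ → ℝ := fun x => (P x - a)/x^(2*e+4) with hF1_def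
    have hF1c : ContinuousWithinAt F1 (Ici r_h) r_h :=
      (ContinuousAt.div (hP_cont.sub continuous_const).continuousAt
        (continuous_pow (2*e+4)).continuousAt (pow_ne_zero _ hrh.ne')).continuousWithinAt
    have hD1 : ∀ x ∈ Ioi r_h, HasDerivAt F1
        (((e:ℝ)+1) * (u x/x^(e+4)) - (2*(e:ℝ)+4) * ((P x - a)/x^(2*e+5))) x := by
      intro x hx
      have hx0 : (0:ℝ) < x := hrh.trans hx
      have h1 := HasDerivAt.div ((hP_deriv x).sub_const a) (hasDerivAt_pow (2*e+4) x)
        (pow_ne_zero _ hx0.ne')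
      rw [hF1_def]
      refine h1.congr_deriv ?_
      rw [show 2*e+4-1 = 2*e+3 from by omega]
      push_cast
      field_simp
      ring
    have hID1 : IntegrableOn (fun x => ((e:ℝ)+1) * (u x/x^(e+4))
        - (2*(e:ℝ)+4) * ((P x - a)/x^(2*e+5))) (Ioi r_h) :=
      (hIu4.const_mul _).sub (hIs1.const_mul _)
    have htail : Tendsto (fun x : ℝ => 1/x^(e+3)) atTop (𝓝 0) := by
      simpa [one_div, Pi.inv_def] using (tendsto_pow_atTop (α := ℝ) (n := e+3) (by omega)).inv_tendsto_atTop
    have htail2 : Tendsto (fun x : ℝ => 1/x^2) atTop (𝓝 0) := by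
      simpa [one_div, Pi.inv_def] using (tendsto_pow_atTop (α := ℝ) (n := 2) (by omega)).inv_tendsto_atTop
    have hF1tend : Tendsto F1 atTop (𝓝 0) := by
      refine squeeze_zero' ?_ ?_ htail
      · filter_upwards [eventually_ge_atTop r_h] with x hx
        exact div_nonneg (hs0 x hx) (pow_nonneg (hrh.le.trans hx) _)
      · filter_upwards [eventually_ge_atTop r_h] with x hx
        have hx0 : (0:ℝ) < x := lt_of_lt_of_le hrh hx
        rw [hF1_def]
        rw [div_le_div_iff₀ (by positivity) (by positivity)]
        nlinarith [hsle x hx, pow_pos hrh (e+1), pow_pos hx0 (e+3), pow_pos hx0 (e+1),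
          (show x^(e+1)*x^(e+3) = x^(2*e+4) from by ring)]
    have hPrh : P r_h = a := by
      rw [hP_def, ha_def]
      simp only [hV_def]
      rw [intervalIntegral.integral_same]
      ring
    have hid1 : ∫ x in Ioi r_h, (((e:ℝ)+1) * (u x/x^(e+4))
        - (2*(e:ℝ)+4) * ((P x - a)/x^(2*e+5))) = 0 := by
      rw [integral_Ioi_of_hasDerivAt_of_tendsto hF1c hD1 hID1 hF1tend]
      rw [hF1_def]
      simp [hPrh]
    have hW_eq : ((e:ℝ)+1) * (∫ x in Ioi r_h, u x/x^(e+4))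
        = (2*(e:ℝ)+4) * ∫ x in Ioi r_h, (P x - a)/x^(2*e+5) := by
      rw [integral_sub (hIu4.const_mul _) (hIs1.const_mul _),
        integral_const_mul, integral_const_mul] at hid1
      linarith [hid1]
    -- FTC identity 2
    set F2 : ℝ → ℝ := fun x => (P x^2 - a^2)/x^(2*e+4) with hF2_def
    have hF2c : ContinuousWithinAt F2 (Ici r_h) r_h :=
      (ContinuousAt.div ((hP_cont.pow 2).sub continuous_const).continuousAt
        (continuous_pow (2*e+4)).continuousAt (pow_ne_zero _ hrh.ne')).continuousWithinAt
    have hD2 : ∀ x ∈ Ioi r_h, HasDerivAt F2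
        (2*((e:ℝ)+1) * (P x * u x/x^(e+4)) - (2*(e:ℝ)+4) * ((P x^2 - a^2)/x^(2*e+5))) x := by
      intro x hx
      have hx0 : (0:ℝ) < x := hrh.trans hx
      have h1 := HasDerivAt.div (((hP_deriv x).pow 2).sub_const (a^2))
        (hasDerivAt_pow (2*e+4) x) (pow_ne_zero _ hx0.ne')
      rw [hF2_def]
      refine h1.congr_deriv ?_
      rw [show 2*e+4-1 = 2*e+3 from by omega, show 2-1 = 1 from by omega]
      simp only [Pi.pow_apply]
      push_cast
      field_simp
      ring
    have hID2 : IntegrableOn (fun x => 2*((e:ℝ)+1) * (P x * u x/x^(e+4))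
        - (2*(e:ℝ)+4) * ((P x^2 - a^2)/x^(2*e+5))) (Ioi r_h) :=
      (hIP.const_mul _).sub (hIs2.const_mul _)
    have hF2tend : Tendsto F2 atTop (𝓝 0) := by
      have hcomb : Tendsto (fun x : ℝ => 1/x^2 + 2*a*(1/x^(e+3))) atTop (𝓝 0) := by
        have h2 := (htail.const_mul (2*a))
        simpa using htail2.add h2
      refine squeeze_zero' ?_ ?_ hcomb
      · filter_upwards [eventually_ge_atTop r_h] with x hx
        have h0 := hs0 x hx
        have hnum0 : 0 ≤ P x^2 - a^2 := by nlinarith [ha_pos]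
        exact div_nonneg hnum0 (pow_nonneg (hrh.le.trans hx) _)
      · filter_upwards [eventually_ge_atTop r_h] with x hx
        have hx0 : (0:ℝ) < x := lt_of_lt_of_le hrh hx
        rw [hF2_def]
        have h0 := hs0 x hx
        have h1 := hsle x hx
        have hub := hP_ub x hx
        have hβ := pow_pos hrh (e+1)
        have hA : P x - a ≤ x^(e+1) := by linarith
        have hB : P x + a ≤ x^(e+1) + 2*a := by linarith
        have hC : (0:ℝ) ≤ x^(e+1) := by positivity
        have hkey : P x^2 - a^2 ≤ x^(e+1)*x^(e+1) + 2*a*x^(e+1) := by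
          nlinarith [mul_le_mul hA hB (by linarith : (0:ℝ) ≤ P x + a) hC]
        rw [div_le_iff₀ (by positivity)]
        have hx1 : (1/x^2 + 2*a*(1/x^(e+3))) * x^(2*e+4) = x^(e+1)*x^(e+1) + 2*a*x^(e+1) := by
          field_simp; ring
        rw [hx1]
        exact hkey
    have hid2 : ∫ x in Ioi r_h, (2*((e:ℝ)+1) * (P x * u x/x^(e+4))
        - (2*(e:ℝ)+4) * ((P x^2 - a^2)/x^(2*e+5))) = 0 := by
      rw [integral_Ioi_of_hasDerivAt_of_tendsto hF2c hD2 hID2 hF2tend]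
      rw [hF2_def]
      simp [hPrh]
    have hQ_eq : 2*((e:ℝ)+1) * (∫ x in Ioi r_h, P x * u x/x^(e+4))
        = (2*(e:ℝ)+4) * ∫ x in Ioi r_h, (P x^2 - a^2)/x^(2*e+5) := by
      rw [integral_sub (hIP.const_mul _) (hIs2.const_mul _),
        integral_const_mul, integral_const_mul] at hid2
      linarith [hid2]
    -- rewrite the normalization
    have hptw2 : ∀ x ∈ Ioi r_h,
        ((e+3 : ℕ) * m x - X x - x ^ (e + 3 - 2)) * Real.exp (-χ x / 2) / x ^ (e + 3 + 1)
        = ((e:ℝ)+3) * (m (max x r_h) * u x / x ^ (e + 4)) - P x * u x / x ^ (e + 4) := by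
      intro x hx
      have hxr : r_h ≤ x := le_of_lt hx
      rw [hde2, hde4, hXVK x hxr, max_eq_left hxr, ← hu_eq hxr]
      simp only [hP_def]
      push_cast
      ring
    rw [setIntegral_congr_fun measurableSet_Ioi hptw2] at hnorm
    rw [integral_sub (hImint.const_mul _) hIP, integral_const_mul] at hnorm
    have hnorm2 : (1:ℝ) = 2 * (((e:ℝ)+3) * (∫ x in Ioi r_h, m (max x r_h) * u x / x ^ (e + 4))
        - ∫ x in Ioi r_h, P x * u x / x ^ (e + 4)) := hnorm
    clear hnorm
    -- master inequality
    have hA1 : ∫ x in Ioi r_h, m (max x r_h) * u x / x ^ (e + 4)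
        ≤ ∫ x in Ioi r_h, f0d / 2 * (u x / x ^ (e + 4)) :=
      setIntegral_mono_on hImint (hIu4.const_mul _) measurableSet_Ioi hmono_m
    have hWval : ∫ x in Ioi r_h, f0d / 2 * (u x / x ^ (e + 4))
        = f0d / 2 * ∫ x in Ioi r_h, u x / x ^ (e + 4) := integral_const_mul _ _
    have hmaster : (1:ℝ) ≤ ((e:ℝ)+3) * f0d * (∫ x in Ioi r_h, u x / x ^ (e + 4))
        - 2 * ∫ x in Ioi r_h, P x * u x / x ^ (e + 4) := by
      have h6 := mul_le_mul_of_nonneg_left hA1 (by positivity : (0:ℝ) ≤ (e:ℝ)+3)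
      rw [hWval] at h6
      linarith [hnorm2, h6]
    have hstep : ((e:ℝ)+1) ≤ (2*(e:ℝ)+4) * (((e:ℝ)+3) * f0d
        * (∫ x in Ioi r_h, (P x - a)/x^(2*e+5)) - ∫ x in Ioi r_h, (P x^2 - a^2)/x^(2*e+5)) := by
      have e1 : ((e:ℝ)+3) * f0d * (((e:ℝ)+1) * (∫ x in Ioi r_h, u x/x^(e+4)))
          = ((e:ℝ)+3) * f0d * ((2*(e:ℝ)+4) * ∫ x in Ioi r_h, (P x - a)/x^(2*e+5)) := by
        rw [hW_eq]
      have e2 := mul_le_mul_of_nonneg_left hmaster (by positivity : (0:ℝ) ≤ (e:ℝ)+1)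
      nlinarith [e1, e2, hQ_eq]
    have hTval : (∫ x in Ioi r_h, (((e:ℝ)+3)*f0d*((P x - a)/x^(2*e+5))
          - (P x^2 - a^2)/x^(2*e+5)))
        = ((e:ℝ)+3) * f0d * (∫ x in Ioi r_h, (P x - a)/x^(2*e+5))
          - ∫ x in Ioi r_h, (P x^2 - a^2)/x^(2*e+5) := by
      rw [integral_sub (hIs1.const_mul _) hIs2, integral_const_mul]
    rcases le_or_gt (((e:ℝ)+3)*f0d) (2*a) with hca | hca
    · -- degenerate case: contradiction
      exfalso
      have hTneg : (∫ x in Ioi r_h, (((e:ℝ)+3)*f0d*((P x - a)/x^(2*e+5))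
          - (P x^2 - a^2)/x^(2*e+5))) ≤ 0 := by
        refine setIntegral_nonpos measurableSet_Ioi (fun x hx => ?_)
        have hx0 : (0:ℝ) < x := hrh.trans hx
        have h0 := hs0 x hx.le
        have hnum : ((e:ℝ)+3)*f0d*(P x - a) - (P x^2 - a^2) ≤ 0 := by
          nlinarith [mul_le_mul_of_nonneg_right hca h0, sq_nonneg (P x - a)]
        have hexpr : ((e:ℝ)+3)*f0d*((P x - a)/x^(2*e+5)) - (P x^2 - a^2)/x^(2*e+5)
            = (((e:ℝ)+3)*f0d*(P x - a) - (P x^2 - a^2))/x^(2*e+5) := by ring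
        rw [hexpr]
        exact div_nonpos_of_nonpos_of_nonneg hnum (by positivity)
      nlinarith [hstep, hTval, hTneg]
    · -- main case
      have hβ := pow_pos hrh (e+1)
      have hpt2 : ∀ x ∈ Ioi r_h,
          (((e:ℝ)+3)*f0d*((P x - a)/x^(2*e+5)) - (P x^2 - a^2)/x^(2*e+5))
          ≤ ((e:ℝ)+3)*f0d*(1/x^(e+4)) - 1/x^3
            - ((((e:ℝ)+3)*f0d - r_h^(e+1))*r_h^(e+1))*(1/x^(2*e+5)) := by
        intro x hx
        have hx0 : (0:ℝ) < x := hrh.trans hx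
        have h0 := hs0 x hx.le
        have h1 := hsle x hx.le
        have h2 := hts x hx.le
        have hnum : ((e:ℝ)+3)*f0d*(P x - a) - (P x^2 - a^2)
            ≤ (x^(e+1) - r_h^(e+1)) * (((e:ℝ)+3)*f0d - 2*r_h^(e+1) - (x^(e+1) - r_h^(e+1))) := by
          have hin1 : (0:ℝ) ≤ ((e:ℝ)+3)*f0d - 2*a + 2*(a - r_h^(e+1))
              - ((x^(e+1) - r_h^(e+1)) - (P x - a)) := by linarith [hαnn, hca.le]
          have hin2 : (0:ℝ) ≤ (a - r_h^(e+1)) - ((x^(e+1) - r_h^(e+1)) - (P x - a)) := by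
            linarith
          nlinarith [mul_nonneg (sub_nonneg.2 h1) hin1, mul_nonneg h0 hin2]
        have hL : ((e:ℝ)+3)*f0d*((P x - a)/x^(2*e+5)) - (P x^2 - a^2)/x^(2*e+5)
            = (((e:ℝ)+3)*f0d*(P x - a) - (P x^2 - a^2))/x^(2*e+5) := by ring
        have hR : ((x^(e+1) - r_h^(e+1)) * (((e:ℝ)+3)*f0d - 2*r_h^(e+1)
              - (x^(e+1) - r_h^(e+1))))/x^(2*e+5)
            = ((e:ℝ)+3)*f0d*(1/x^(e+4)) - 1/x^3
              - ((((e:ℝ)+3)*f0d - r_h^(e+1))*r_h^(e+1))*(1/x^(2*e+5)) := by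
          field_simp
          ring
        calc ((e:ℝ)+3)*f0d*((P x - a)/x^(2*e+5)) - (P x^2 - a^2)/x^(2*e+5)
            = (((e:ℝ)+3)*f0d*(P x - a) - (P x^2 - a^2))/x^(2*e+5) := hL
          _ ≤ ((x^(e+1) - r_h^(e+1)) * (((e:ℝ)+3)*f0d - 2*r_h^(e+1)
              - (x^(e+1) - r_h^(e+1))))/x^(2*e+5) := (div_le_div_iff_of_pos_right (by positivity)).2 hnum
          _ = _ := hR
      have hIL' : IntegrableOn (fun x => (((e:ℝ)+3)*f0d*((P x - a)/x^(2*e+5))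
          - (P x^2 - a^2)/x^(2*e+5))) (Ioi r_h) := (hIs1.const_mul _).sub hIs2
      have hIR' : IntegrableOn (fun x => ((e:ℝ)+3)*f0d*(1/x^(e+4)) - 1/x^3
          - ((((e:ℝ)+3)*f0d - r_h^(e+1))*r_h^(e+1))*(1/x^(2*e+5))) (Ioi r_h) :=
        ((hpow4.const_mul _).sub hpow3).sub (hpow25.const_mul _)
      have hle2 := setIntegral_mono_on hIL' hIR' measurableSet_Ioi hpt2
      have hRval : (∫ x in Ioi r_h, (((e:ℝ)+3)*f0d*(1/x^(e+4)) - 1/x^3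
            - ((((e:ℝ)+3)*f0d - r_h^(e+1))*r_h^(e+1))*(1/x^(2*e+5))))
          = ((e:ℝ)+3)*f0d*(1/(((e:ℝ)+3)*r_h^(e+3))) - 1/(2*r_h^2)
            - ((((e:ℝ)+3)*f0d - r_h^(e+1))*r_h^(e+1))*(1/((2*(e:ℝ)+4)*r_h^(2*e+4))) := by
        have hIRa : IntegrableOn (fun x : ℝ => ((e:ℝ)+3)*f0d*(1/x^(e+4)) - 1/x^3) (Ioi r_h) :=
          (hpow4.const_mul _).sub hpow3
        rw [integral_sub hIRa (hpow25.const_mul _),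
          integral_sub (hpow4.const_mul _) hpow3, integral_const_mul, integral_const_mul,
          hval3, hval4, hval25]
      have hfin : ((e:ℝ)+1) ≤ (2*(e:ℝ)+4) * (((e:ℝ)+3)*f0d*(1/(((e:ℝ)+3)*r_h^(e+3)))
          - 1/(2*r_h^2)
          - ((((e:ℝ)+3)*f0d - r_h^(e+1))*r_h^(e+1))*(1/((2*(e:ℝ)+4)*r_h^(2*e+4)))) := by
        have h8 : ((e:ℝ)+3) * f0d * (∫ x in Ioi r_h, (P x - a)/x^(2*e+5))
            - (∫ x in Ioi r_h, (P x^2 - a^2)/x^(2*e+5))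
            ≤ ((e:ℝ)+3)*f0d*(1/(((e:ℝ)+3)*r_h^(e+3))) - 1/(2*r_h^2)
              - ((((e:ℝ)+3)*f0d - r_h^(e+1))*r_h^(e+1))*(1/((2*(e:ℝ)+4)*r_h^(2*e+4))) := by
          rw [← hTval, ← hRval]
          exact hle2
        have h9 := mul_le_mul_of_nonneg_left h8 (by positivity : (0:ℝ) ≤ 2*(e:ℝ)+4)
        linarith [hstep, h9]
      have hgoal_eq : (2*(e:ℝ)+4) * (((e:ℝ)+3)*f0d*(1/(((e:ℝ)+3)*r_h^(e+3)))
          - 1/(2*r_h^2)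
          - ((((e:ℝ)+3)*f0d - r_h^(e+1))*r_h^(e+1))*(1/((2*(e:ℝ)+4)*r_h^(2*e+4))))
          = ((e:ℝ)+1) * (f0d/r_h^(e+3) - 1/r_h^2) := by
        field_simp
        ring
      rw [hgoal_eq] at hfin
      have hpos1 : (0:ℝ) < (e:ℝ)+1 := by positivity
      have hfin2 : (1:ℝ) ≤ f0d/r_h^(e+3) - 1/r_h^2 := by
        have h10 : ((e:ℝ)+1) * 1 ≤ ((e:ℝ)+1) * (f0d/r_h^(e+3) - 1/r_h^2) := by linarith [hfin]
        exact (mul_le_mul_iff_right₀ hpos1).mp h10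
      linarith [hfin2]
  · -- divergent case : X vanishes on [r_h, ∞)
    have hX0 : ∀ x, r_h ≤ x → X x = 0 := by
      intro x hx
      rw [hXG hx]
      have hni : ¬ IntegrableOn G (Ioi x) volume := by
        intro h
        apply hInt
        rw [← Ioc_union_Ioi_eq_Ioi hx]
        exact (hG_cont.integrableOn_Ioc).union h
      rw [integral_undef hni, mul_zero]
    -- rewrite the normalization integral
    have hptw : ∀ x ∈ Ioi r_h,
        ((e+3 : ℕ) * m x - X x - x ^ (e + 3 - 2)) * Real.exp (-χ x / 2) / x ^ (e + 3 + 1)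
        = ((e:ℝ)+3) * (m (max x r_h) * u x / x ^ (e + 4)) - u x / x ^ 3 := by
      intro x hx
      have hxr : r_h ≤ x := (le_of_lt hx)
      have hx0 : x ≠ 0 := (hrh.trans hx).ne'
      rw [hde2, hde4, hX0 x hxr, max_eq_left hxr, ← hu_eq hxr]
      push_cast
      field_simp
      ring
    rw [setIntegral_congr_fun measurableSet_Ioi hptw] at hnorm
    rw [integral_sub (hImint.const_mul _) hIu3, integral_const_mul] at hnorm
    have hnorm2 : (1:ℝ) = 2 * (((e:ℝ)+3) * (∫ x in Ioi r_h, m (max x r_h) * u x / x ^ (e + 4))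
        - ∫ x in Ioi r_h, u x / x ^ 3) := hnorm
    clear hnorm
    -- the single-crossing comparison
    set c : ℝ := ((e:ℝ) + 3) * f0d with hc_def
    have hc0 : 0 < c := by positivity
    set ξ : ℝ := max r_h ((c/2) ^ ((1:ℝ)/(e+1))) with hξ_def
    set hh : ℝ → ℝ := fun x => c/2 * (1 / x ^ (e+4)) - 1 / x ^ 3 with hh_def
    have hhInt : IntegrableOn hh (Ioi r_h) := (hpow4.const_mul (c/2)).sub hpow3
    have hrpow : ∀ z : ℝ, 0 ≤ z → ((z ^ (e+1) : ℝ)) ^ ((1:ℝ)/(e+1)) = z := by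
      intro z hz
      rw [← Real.rpow_natCast z (e+1), ← Real.rpow_mul hz]
      push_cast
      rw [mul_one_div, div_self (by positivity : ((e:ℝ)+1) ≠ 0), Real.rpow_one]
    have hcross : ∀ x ∈ Ioi r_h,
        ((e:ℝ)+3) * (f0d/2 * (u x / x ^ (e + 4))) - u x / x ^ 3 ≤ u ξ * hh x := by
      intro x hx
      have hx0 : (0:ℝ) < x := hrh.trans hx
      have hlhs : ((e:ℝ)+3) * (f0d/2 * (u x / x ^ (e + 4))) - u x / x ^ 3 = u x * hh x := by
        simp only [hh_def, hc_def]; ring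
      rw [hlhs]
      rcases le_or_gt 0 (hh x) with hsgn | hsgn
      · -- here x^(e+1) ≤ c/2, so x ≤ ξ
        have hle : x ^ (e+1) ≤ c/2 := by
          have h1 : c/2 * (1 / x ^ (e+4)) ≥ 1 / x ^ 3 := by
            simp only [hh_def] at hsgn; linarith
          have h2 : c/2 / x ^ (e+4) ≥ 1 / x ^ 3 := by
            rw [div_eq_mul_one_div]; exact h1
          rw [ge_iff_le, div_le_div_iff₀ (by positivity) (by positivity)] at h2
          nlinarith [pow_pos hx0 3, pow_pos hx0 (e+1),
            (show x ^ (e+1) * x ^ 3 = x ^ (e+4) from by ring)]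
        have hxξ : x ≤ ξ := by
          have h4 : (x ^ (e+1) : ℝ) ^ ((1:ℝ)/(e+1)) ≤ (c/2) ^ ((1:ℝ)/(e+1)) :=
            Real.rpow_le_rpow (by positivity) hle (by positivity)
          rw [hrpow x hx0.le] at h4
          exact le_trans h4 (le_max_right _ _)
        exact mul_le_mul_of_nonneg_right (hu_mono hxξ) hsgn
      · -- here c/2 < x^(e+1), so ξ ≤ x
        have hle : c/2 ≤ x ^ (e+1) := by
          have h1 : c/2 * (1 / x ^ (e+4)) < 1 / x ^ 3 := by
            simp only [hh_def] at hsgn; linarith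
          have h2 : c/2 / x ^ (e+4) < 1 / x ^ 3 := by
            rw [div_eq_mul_one_div]; exact h1
          rw [div_lt_div_iff₀ (by positivity) (by positivity)] at h2
          nlinarith [pow_pos hx0 3, (show x ^ (e+1) * x ^ 3 = x ^ (e+4) from by ring)]
        have hξx : ξ ≤ x := by
          refine max_le (le_of_lt hx) ?_
          have h3 : (c/2) ^ ((1:ℝ)/(e+1)) ≤ (x ^ (e+1) : ℝ) ^ ((1:ℝ)/(e+1)) :=
            Real.rpow_le_rpow (by positivity) hle (by positivity)
          rw [hrpow x hx0.le] at h3; exact h3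
        exact mul_le_mul_of_nonpos_right (hu_mono hξx) hsgn.le
    -- integrate the comparison
    have hIlhs : IntegrableOn
        (fun x => ((e:ℝ)+3) * (f0d/2 * (u x / x ^ (e + 4))) - u x / x ^ 3) (Ioi r_h) := by
      exact ((hIu4.const_mul (f0d/2)).const_mul _).sub hIu3
    have hint_le : ∫ x in Ioi r_h, (((e:ℝ)+3) * (f0d/2 * (u x / x ^ (e + 4))) - u x / x ^ 3)
        ≤ ∫ x in Ioi r_h, u ξ * hh x :=
      setIntegral_mono_on hIlhs (hhInt.const_mul _) measurableSet_Ioi hcross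
    have hval_hh : ∫ x in Ioi r_h, u ξ * hh x
        = u ξ * (f0d / (2 * r_h ^ (e+3)) - 1 / (2 * r_h ^ 2)) := by
      rw [integral_const_mul]
      congr 1
      simp only [hh_def]
      rw [integral_sub (hpow4.const_mul (c/2)) hpow3, integral_const_mul, hval4, hval3]
      rw [hc_def]
      field_simp
    -- assemble
    have hmid : (1:ℝ)/2 ≤ u ξ * (f0d / (2 * r_h ^ (e+3)) - 1 / (2 * r_h ^ 2)) := by
      have hA1 : ∫ x in Ioi r_h, m (max x r_h) * u x / x ^ (e + 4)
          ≤ ∫ x in Ioi r_h, f0d / 2 * (u x / x ^ (e + 4)) :=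
        setIntegral_mono_on hImint (hIu4.const_mul _) measurableSet_Ioi hmono_m
      have h5 : (1:ℝ)/2 ≤ ((e:ℝ)+3) * (∫ x in Ioi r_h, f0d / 2 * (u x / x ^ (e + 4)))
          - ∫ x in Ioi r_h, u x / x ^ 3 := by
        have h6 := mul_le_mul_of_nonneg_left hA1 (by positivity : (0:ℝ) ≤ (e:ℝ)+3)
        linarith [hnorm2, h6]
      have hIc : IntegrableOn (fun x => ((e:ℝ)+3) * (f0d/2 * (u x / x ^ (e+4)))) (Ioi r_h) :=
        (hIu4.const_mul (f0d/2)).const_mul ((e:ℝ)+3)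
      have h9 : ∫ x in Ioi r_h, (((e:ℝ)+3) * (f0d/2 * (u x / x ^ (e + 4))) - u x / x ^ 3)
          = ((e:ℝ)+3) * (∫ x in Ioi r_h, f0d / 2 * (u x / x ^ (e + 4)))
            - ∫ x in Ioi r_h, u x / x ^ 3 := by
        rw [integral_sub hIc hIu3, integral_const_mul]
      linarith [hint_le, hval_hh.le, hval_hh.ge, h9]
    -- contradiction with the negated goal
    by_contra hcon
    push_neg at hcon
    have hφ : f0d / (2 * r_h ^ (e+3)) - 1 / (2 * r_h ^ 2) < 1/2 := by
      have : f0d / r_h ^ (e+3) - 1 / r_h ^ 2 < 1 := hcon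
      have h1 : f0d / (2 * r_h ^ (e+3)) = (f0d / r_h ^ (e+3)) / 2 := by ring
      have h2 : 1 / (2 * r_h ^ 2) = (1 / r_h ^ 2) / 2 := by ring
      rw [h1, h2]
      linarith
    have huξ1 : u ξ ≤ 1 := hu_le1 ξ
    have huξ0 : 0 < u ξ := hu_pos ξ
    set φ := f0d / (2 * r_h ^ (e+3)) - 1 / (2 * r_h ^ 2) with hφ_def
    have hφpos : 0 < φ := by nlinarith
    nlinarith [mul_le_of_le_one_left hφpos.le huξ1]
end

section
/- Let d ≥ 3, r_h > 0, f₀ᵈ > 0, Q_m² ≥ 0, and let χ : [r_h, ∞) → ℝ be continuous, nonincreasing, and nonnegative. Define W(r) = d·f₀ᵈ/2 − 2Q_m²/((d−2)r^{d−2}) (the planar case k = 0). Suppose W(r_h) ≥ 0 and 1 ≤ 2 ∫_{r_h}^∞ W(x) e^{-χ(x)/2} x^{-(d+1)} dx. Then 1 ≤ f₀ᵈ/r_hᵈ − 2Q_m²/((d−1)(d−2) r_h^{2d−2}). -/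
open MeasureTheory Set

lemma aux_intOn (n : ℕ) (hn : 2 ≤ n) (c : ℝ) (hc : 0 < c) :
    IntegrableOn (fun x : ℝ => (x ^ n)⁻¹) (Set.Ioi c) := by
  have ha : -(n : ℝ) < -1 := by
    have : (1:ℝ) < n := by exact_mod_cast Nat.lt_of_lt_of_le one_lt_two hn
    linarith
  refine (integrableOn_Ioi_rpow_of_lt ha hc).congr_fun (fun x hx => ?_) measurableSet_Ioi
  have hx0 : 0 < x := hc.trans hx
  dsimp only
  rw [Real.rpow_neg hx0.le, Real.rpow_natCast]

lemma aux_val (n : ℕ) (hn : 2 ≤ n) (c : ℝ) (hc : 0 < c) :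
    ∫ x in Set.Ioi c, (x ^ n)⁻¹ = (c ^ (n - 1))⁻¹ / ((n : ℝ) - 1) := by
  have ha : -(n : ℝ) < -1 := by
    have : (1:ℝ) < n := by exact_mod_cast Nat.lt_of_lt_of_le one_lt_two hn
    linarith
  have h1 : ∫ x in Set.Ioi c, (x ^ n)⁻¹ = ∫ x in Set.Ioi c, x ^ (-(n:ℝ)) := by
    refine setIntegral_congr_fun measurableSet_Ioi (fun x hx => ?_)
    have hx0 : 0 < x := hc.trans hx
    rw [Real.rpow_neg hx0.le, Real.rpow_natCast]
  rw [h1, integral_Ioi_rpow_of_lt ha hc]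
  have hne : ((n : ℝ) - 1) ≠ 0 := by linarith
  have hcast : ((n - 1 : ℕ) : ℝ) = (n : ℝ) - 1 := by
    have := Nat.cast_sub (le_trans one_le_two hn) (R := ℝ)
    simpa using this
  have h2 : c ^ (-(n:ℝ) + 1) = (c ^ (n - 1))⁻¹ := by
    rw [show -(n:ℝ) + 1 = -((n:ℝ) - 1) by ring, Real.rpow_neg hc.le, ← hcast,
      Real.rpow_natCast]
  rw [h2, show -(n:ℝ) + 1 = -((n:ℝ) - 1) by ring, div_neg, neg_div, neg_neg]

theorem stmt_6 (d : ℕ) (hd : 3 ≤ d) (r_h f0d Qm2 : ℝ) (hrh : 0 < r_h) (hf0 : 0 < f0d)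
    (hQ : 0 ≤ Qm2)
    (χ : ℝ → ℝ) (hχc : ContinuousOn χ (Set.Ici r_h)) (hχa : AntitoneOn χ (Set.Ici r_h))
    (hχn : ∀ x, r_h ≤ x → 0 ≤ χ x)
    (W : ℝ → ℝ) (hW : ∀ r, W r = d * f0d / 2 - 2 * Qm2 / (((d : ℝ) - 2) * r ^ (d - 2)))
    (hWh : 0 ≤ W r_h)
    (hnorm : 1 ≤ 2 * ∫ x in Set.Ioi r_h, W x * Real.exp (-χ x / 2) / x ^ (d + 1)) :
    1 ≤ f0d / r_h ^ d - 2 * Qm2 / (((d : ℝ) - 1) * ((d : ℝ) - 2) * r_h ^ (2 * d - 2)) := by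
  have hd2 : (0:ℝ) < (d:ℝ) - 2 := by
    have : (3:ℝ) ≤ d := by exact_mod_cast hd
    linarith
  have hd1 : (0:ℝ) < (d:ℝ) - 1 := by linarith
  have hdpos : (0:ℝ) < d := by linarith
  set A : ℝ := d * f0d / 2 with hA
  set B : ℝ := 2 * Qm2 / ((d:ℝ) - 2) with hB
  have hBnn : 0 ≤ B := div_nonneg (by linarith) hd2.le
  -- rewrite W
  have hW' : ∀ r : ℝ, 0 < r → W r = A - B / r ^ (d - 2) := by
    intro r hr
    rw [hW r, hA, hB, div_div]
  -- W nonneg on Ici r_h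
  have hWnn : ∀ x, r_h ≤ x → 0 ≤ W x := by
    intro x hx
    have hx0 : 0 < x := hrh.trans_le hx
    have h1 : B / x ^ (d-2) ≤ B / r_h ^ (d-2) := by
      apply div_le_div_of_nonneg_left hBnn (pow_pos hrh _)
      exact pow_le_pow_left₀ hrh.le hx _
    have := hW' r_h hrh
    rw [hW' x hx0]
    rw [this] at hWh
    linarith
  -- the dominating function
  set g : ℝ → ℝ := fun x => A * (x ^ (d+1))⁻¹ - B * (x ^ (2*d-1))⁻¹ with hg
  have hgint : IntegrableOn g (Set.Ioi r_h) := by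
    exact ((aux_intOn (d+1) (by omega) r_h hrh).const_mul A).sub
      ((aux_intOn (2*d-1) (by omega) r_h hrh).const_mul B)
  have hle : ∀ x ∈ Set.Ioi r_h, W x * Real.exp (-χ x / 2) / x ^ (d+1) ≤ g x := by
    intro x hx
    have hxr : r_h < x := hx
    have hx0 : 0 < x := hrh.trans hxr
    have hexp : Real.exp (-χ x / 2) ≤ 1 := by
      apply Real.exp_le_one_iff.mpr
      have := hχn x hxr.le
      linarith
    have hWx : 0 ≤ W x := hWnn x hxr.le
    have hp : (0:ℝ) < x ^ (d+1) := pow_pos hx0 _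
    have step1 : W x * Real.exp (-χ x / 2) / x ^ (d+1) ≤ W x / x ^ (d+1) := by
      apply div_le_div_of_nonneg_right ?_ hp.le
      nlinarith [Real.exp_pos (-χ x / 2)]
    refine step1.trans (le_of_eq ?_)
    rw [hW' x hx0]
    have hpow : x ^ (2*d-1) = x ^ (d-2) * x ^ (d+1) := by
      rw [← pow_add]; congr 1; omega
    show _ = A * (x ^ (d+1))⁻¹ - B * (x ^ (2*d-1))⁻¹
    rw [sub_div]
    congr 1
    · rw [div_div, ← hpow, div_eq_mul_inv]
  have hnonneg : ∀ x ∈ Set.Ioi r_h, 0 ≤ W x * Real.exp (-χ x / 2) / x ^ (d+1) := by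
    intro x hx
    have hx0 : 0 < x := hrh.trans hx
    have := hWnn x (le_of_lt hx)
    positivity
  have hmono : (∫ x in Set.Ioi r_h, W x * Real.exp (-χ x / 2) / x ^ (d+1)) ≤
      ∫ x in Set.Ioi r_h, g x := by
    apply integral_mono_of_nonneg
    · exact (ae_restrict_iff' measurableSet_Ioi).mpr (Filter.Eventually.of_forall hnonneg)
    · exact hgint
    · exact (ae_restrict_iff' measurableSet_Ioi).mpr (Filter.Eventually.of_forall hle)
  have hval : ∫ x in Set.Ioi r_h, g x =
      A * ((r_h ^ d)⁻¹ / ((d:ℝ))) - B * ((r_h ^ (2*d-2))⁻¹ / (2*(d:ℝ) - 2)) := by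
    rw [hg]
    rw [integral_sub ((aux_intOn (d+1) (by omega) r_h hrh).const_mul A)
      ((aux_intOn (2*d-1) (by omega) r_h hrh).const_mul B),
      integral_const_mul, integral_const_mul, aux_val (d+1) (by omega) r_h hrh,
      aux_val (2*d-1) (by omega) r_h hrh]
    have e1 : d + 1 - 1 = d := by omega
    have e2 : 2*d - 1 - 1 = 2*d - 2 := by omega
    have e3 : ((d:ℝ) + 1) - 1 = (d:ℝ) := by ring
    have e4 : ((2*d - 1 : ℕ) : ℝ) - 1 = 2*(d:ℝ) - 2 := by
      have : ((2*d - 1 : ℕ) : ℝ) = 2*(d:ℝ) - 1 := by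
        have h := Nat.cast_sub (by omega : 1 ≤ 2*d) (R := ℝ)
        push_cast at h ⊢; linarith
      linarith
    rw [e1, e2, e4]
    norm_num
  have hfinal : 2 * (A * ((r_h ^ d)⁻¹ / ((d:ℝ))) - B * ((r_h ^ (2*d-2))⁻¹ / (2*(d:ℝ) - 2)))
      = f0d / r_h ^ d - 2 * Qm2 / (((d : ℝ) - 1) * ((d : ℝ) - 2) * r_h ^ (2 * d - 2)) := by
    rw [hA, hB]
    have h1 : (0:ℝ) < r_h ^ d := pow_pos hrh _
    have h2 : (0:ℝ) < r_h ^ (2*d-2) := pow_pos hrh _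
    have h3 : (0:ℝ) < 2*(d:ℝ) - 2 := by linarith
    field_simp
  calc 1 ≤ 2 * ∫ x in Set.Ioi r_h, W x * Real.exp (-χ x / 2) / x ^ (d + 1) := hnorm
    _ ≤ 2 * ∫ x in Set.Ioi r_h, g x := by linarith
    _ = _ := by rw [hval, hfinal]
end

section
/- Define χ : [1, ∞) → ℝ by e^{-χ(r)/2} = (4 + tanh(r − 5))/5, i.e. χ(r) = −2·ln((4 + tanh(r−5))/5). Then χ is strictly decreasing, χ(r) > 0 for all r ≥ 1, lim_{r→∞} χ(r) = 0, and the function X(r) = ∫_r^∞ (1 − e^{-χ(x)/2}) dx satisfies X(r) = (ln cosh(r−5) − r + ln 2)/5 + 1 and X(r) ≥ 0 for all r ≥ 1. -/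
open Real Filter Set MeasureTheory

lemma tanh_eq' (x : ℝ) : Real.tanh x = 1 - 2 / (Real.exp (2*x) + 1) := by
  rw [Real.tanh_eq_sinh_div_cosh, Real.sinh_eq, Real.cosh_eq]
  have h1 : (0:ℝ) < Real.exp x := Real.exp_pos x
  have h3 : Real.exp (-x) = (Real.exp x)⁻¹ := Real.exp_neg x
  have h4 : Real.exp (2*x) = Real.exp x * Real.exp x := by rw [two_mul, Real.exp_add]
  rw [h3, h4]
  have hB : (Real.exp x + (Real.exp x)⁻¹) / 2 ≠ 0 := by positivity
  rw [div_eq_iff hB]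
  field_simp
  ring

lemma tanh_lt_one' (x : ℝ) : Real.tanh x < 1 := by
  rw [tanh_eq']
  have : 0 < 2 / (Real.exp (2*x) + 1) := by positivity
  linarith

lemma neg_one_lt_tanh' (x : ℝ) : -1 < Real.tanh x := by
  rw [tanh_eq']
  have h : Real.exp (2*x) + 1 > 1 := by nlinarith [Real.exp_pos (2*x)]
  have : 2 / (Real.exp (2*x) + 1) < 2 := by
    rw [div_lt_iff₀ (by linarith)]; nlinarith
  linarith

lemma tanh_strictMono' : StrictMono Real.tanh := by
  intro a b hab
  rw [tanh_eq', tanh_eq']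
  have h : Real.exp (2*a) < Real.exp (2*b) := Real.exp_lt_exp.2 (by linarith)
  have ha : (0:ℝ) < Real.exp (2*a) + 1 := by positivity
  have : 2 / (Real.exp (2*b) + 1) < 2 / (Real.exp (2*a) + 1) := by
    apply div_lt_div_of_pos_left (by norm_num) ha (by linarith)
  linarith

lemma tanh_tendsto_one : Tendsto Real.tanh atTop (nhds 1) := by
  have h : Tendsto (fun x : ℝ => Real.exp (2*x) + 1) atTop atTop :=
    (Real.tendsto_exp_atTop.comp (tendsto_atTop_atTop_of_monotone
      (fun a b hab => by linarith) (fun b => ⟨b/2, by linarith⟩))).atTop_add tendsto_const_nhds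
  have h2 : Tendsto (fun x : ℝ => 2 / (Real.exp (2*x) + 1)) atTop (nhds 0) :=
    Tendsto.div_atTop tendsto_const_nhds h
  have := (tendsto_const_nhds (x := (1:ℝ)) (f := atTop)).sub h2
  simp only [sub_zero] at this
  convert this using 1
  funext x
  exact tanh_eq' x

theorem stmt_12 (χ X : ℝ → ℝ)
    (hχ : ∀ r, χ r = -2 * Real.log ((4 + Real.tanh (r - 5)) / 5))
    (hX : ∀ r, X r = ∫ x in Set.Ioi r, (1 - Real.exp (-χ x / 2))) :
    StrictAntiOn χ (Set.Ici (1 : ℝ)) ∧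
    (∀ r : ℝ, 1 ≤ r → 0 < χ r) ∧
    Filter.Tendsto χ Filter.atTop (nhds 0) ∧
    (∀ r : ℝ, 1 ≤ r →
      X r = (Real.log (Real.cosh (r - 5)) - r + Real.log 2) / 5 + 1) ∧
    (∀ r : ℝ, 1 ≤ r → 0 ≤ X r) := by
  have harg : ∀ r : ℝ, 0 < (4 + Real.tanh (r - 5)) / 5 := by
    intro r
    have := neg_one_lt_tanh' (r - 5)
    linarith
  have hexp : ∀ x : ℝ, Real.exp (-χ x / 2) = (4 + Real.tanh (x - 5)) / 5 := by
    intro x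
    rw [hχ]
    rw [show -(-2 * Real.log ((4 + Real.tanh (x - 5)) / 5)) / 2
        = Real.log ((4 + Real.tanh (x - 5)) / 5) by ring]
    exact Real.exp_log (harg x)
  have hint : ∀ x : ℝ, 1 - Real.exp (-χ x / 2) = (1 - Real.tanh (x - 5)) / 5 := by
    intro x; rw [hexp]; ring
  -- strict anti
  have hSA : StrictAntiOn χ (Set.Ici (1 : ℝ)) := by
    intro a _ b _ hab
    rw [hχ, hχ]
    have ht : Real.tanh (a - 5) < Real.tanh (b - 5) := tanh_strictMono' (by linarith)
    have hl : Real.log ((4 + Real.tanh (a - 5)) / 5) < Real.log ((4 + Real.tanh (b - 5)) / 5) :=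
      Real.log_lt_log (harg a) (by linarith)
    linarith
  -- positivity
  have hpos : ∀ r : ℝ, 1 ≤ r → 0 < χ r := by
    intro r _
    rw [hχ]
    have h1 : (4 + Real.tanh (r - 5)) / 5 < 1 := by
      have := tanh_lt_one' (r - 5); linarith
    have := Real.log_neg (harg r) h1
    linarith
  -- tendsto
  have htend : Tendsto χ atTop (nhds 0) := by
    have h0 : Tendsto (fun r : ℝ => Real.tanh (r - 5)) atTop (nhds 1) := by
      have := tanh_tendsto_one.comp (tendsto_atTop_add_const_right atTop (-5) tendsto_id)
      simpa [Function.comp_def, sub_eq_add_neg] using this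
    have h1 : Tendsto (fun r : ℝ => (4 + Real.tanh (r - 5)) / 5) atTop (nhds 1) := by
      have h2 := ((tendsto_const_nhds (x := (4:ℝ)) (f := atTop)).add h0).div_const 5
      norm_num at h2
      exact h2
    have h2 : Tendsto (fun r : ℝ => Real.log ((4 + Real.tanh (r - 5)) / 5)) atTop (nhds 0) := by
      have := (Real.continuousAt_log (x := 1) one_ne_zero).tendsto.comp h1
      simpa [Function.comp_def] using this
    have h3 := h2.const_mul (-2 : ℝ)
    rw [mul_zero] at h3
    have hfe : χ = fun r => -2 * Real.log ((4 + Real.tanh (r - 5)) / 5) := funext hχ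
    rw [hfe]
    exact h3
  -- closed form
  have hXform : ∀ r : ℝ, X r = (Real.log (Real.cosh (r - 5)) - r + Real.log 2) / 5 + 1 := by
    intro r
    rw [hX]
    have hrw : (fun x : ℝ => 1 - Real.exp (-χ x / 2))
        = fun x => (1 - Real.tanh (x - 5)) / 5 := funext hint
    rw [show (∫ x in Set.Ioi r, (1 - Real.exp (-χ x / 2)))
        = ∫ x in Set.Ioi r, (1 - Real.tanh (x - 5)) / 5 by
      exact congrArg _ hrw]
    set g : ℝ → ℝ := fun x => (x - Real.log (Real.cosh (x - 5))) / 5 with hg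
    have hderiv : ∀ x ∈ Set.Ici r, HasDerivAt g ((1 - Real.tanh (x - 5)) / 5) x := by
      intro x _
      have h1 : HasDerivAt (fun y : ℝ => y - 5) 1 x := (hasDerivAt_id x).sub_const 5
      have h2 : HasDerivAt (fun y : ℝ => Real.cosh (y - 5)) (Real.sinh (x - 5) * 1) x :=
        by have := (Real.hasDerivAt_cosh (x - 5)).comp x h1; exact this
      have h3 : HasDerivAt (fun y : ℝ => Real.log (Real.cosh (y - 5)))
          ((Real.cosh (x - 5))⁻¹ * (Real.sinh (x - 5) * 1)) x :=
        by have := (Real.hasDerivAt_log (Real.cosh_pos (x := x - 5)).ne').comp x h2; exact this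
      have h4 := ((hasDerivAt_id x).sub h3).div_const 5
      refine h4.congr_deriv ?_
      rw [Real.tanh_eq_sinh_div_cosh]
      field_simp
    have hnonneg : ∀ x ∈ Set.Ioi r, 0 ≤ (1 - Real.tanh (x - 5)) / 5 := by
      intro x _
      have := tanh_lt_one' (x - 5)
      linarith
    have hgtend : Tendsto g atTop (nhds (1 + Real.log 2 / 5)) := by
      have hcosh : ∀ u : ℝ, Real.log (Real.cosh u)
          = u - Real.log 2 + Real.log (1 + Real.exp (-(2*u))) := by
        intro u
        have h1 : Real.cosh u = Real.exp u * (1 + Real.exp (-(2*u))) / 2 := by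
          rw [Real.cosh_eq]
          rw [show -(2*u) = -u + -u by ring, Real.exp_add,
            show Real.exp (-u) = (Real.exp u)⁻¹ from Real.exp_neg u]
          field_simp
        rw [h1]
        have e1 : (0:ℝ) < Real.exp u * (1 + Real.exp (-(2*u))) := by positivity
        rw [Real.log_div e1.ne' two_ne_zero,
          Real.log_mul (Real.exp_pos u).ne' (by positivity), Real.log_exp]
        ring
      have hge : g = fun x => (5 + Real.log 2 - Real.log (1 + Real.exp (-(2*(x-5))))) / 5 := by
        funext x
        rw [hg]
        simp only
        rw [hcosh (x - 5)]
        ring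
      rw [hge]
      have h0 : Tendsto (fun x : ℝ => Real.exp (-(2*(x-5)))) atTop (nhds 0) := by
        apply Real.tendsto_exp_atBot.comp
        have hup : Tendsto (fun x : ℝ => 2*(x-5)) atTop atTop := by
          apply Tendsto.const_mul_atTop two_pos
          exact tendsto_atTop_add_const_right _ _ tendsto_id
        exact tendsto_neg_atTop_atBot.comp hup
      have h1 : Tendsto (fun x : ℝ => Real.log (1 + Real.exp (-(2*(x-5))))) atTop (nhds 0) := by
        have hadd := (tendsto_const_nhds (x := (1:ℝ)) (f := atTop)).add h0
        rw [add_zero] at hadd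
        have := (Real.continuousAt_log (x := 1) one_ne_zero).tendsto.comp hadd
        simpa [Function.comp_def] using this
      have h2 := ((tendsto_const_nhds (x := (5 + Real.log 2 : ℝ)) (f := atTop)).sub h1).div_const 5
      simp only [sub_zero] at h2
      convert h2 using 2
      ring
    rw [MeasureTheory.integral_Ioi_of_hasDerivAt_of_nonneg' hderiv hnonneg hgtend]
    rw [hg]
    simp only
    ring
  refine ⟨hSA, hpos, htend, fun r _ => hXform r, fun r hr => ?_⟩
  rw [hXform r]
  have h1 : Real.exp (r - 5) / 2 ≤ Real.cosh (r - 5) := by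
    rw [Real.cosh_eq]
    have := (Real.exp_pos (-(r-5))).le
    linarith
  have h2 : Real.log (Real.exp (r - 5) / 2) ≤ Real.log (Real.cosh (r - 5)) :=
    Real.log_le_log (by positivity) h1
  rw [Real.log_div (Real.exp_pos _).ne' two_ne_zero, Real.log_exp] at h2
  linarith
end

section
/- Let d ≥ 3, r_h > 0, f₀ᵈ > 0, and let χ, m : [r_h, ∞) → ℝ be continuous with χ ≥ 0, 0 ≤ m(x) ≤ f₀ᵈ/2, and 1 = 2d ∫_{r_h}^∞ m(x) e^{-χ(x)/2} x^{-(d+1)} dx. If moreover f₀ᵈ = r_hᵈ (the Penrose inequality is saturated), then m(x) = f₀ᵈ/2 and χ(x) = 0 for all x ≥ r_h. -/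
open MeasureTheory Set Real

theorem stmt_15 (d : ℕ) (hd : 3 ≤ d) (r_h f0d : ℝ) (hrh : 0 < r_h) (hf0 : 0 < f0d)
    (χ m : ℝ → ℝ) (hχc : ContinuousOn χ (Set.Ici r_h)) (hmc : ContinuousOn m (Set.Ici r_h))
    (hχn : ∀ x, r_h ≤ x → 0 ≤ χ x)
    (hmb : ∀ x, r_h ≤ x → 0 ≤ m x ∧ m x ≤ f0d / 2)
    (hnorm : 1 = 2 * d * ∫ x in Set.Ioi r_h, m x * Real.exp (-χ x / 2) / x ^ (d + 1))
    (hsat : f0d = r_h ^ d) :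
    ∀ x, r_h ≤ x → m x = f0d / 2 ∧ χ x = 0 := by
  have hdpos : (0:ℝ) < d := by positivity
  have ha : (-(d+1) : ℝ) < -1 := by
    have : (1:ℝ) ≤ d := by exact_mod_cast Nat.one_le_of_lt hd
    linarith
  -- value of ∫ x^(-(d+1))
  have hint0 : ∫ x in Ioi r_h, x ^ (-(d+1:ℝ)) = r_h ^ (-(d:ℝ)) / d := by
    rw [integral_Ioi_rpow_of_lt ha hrh]
    have : (-(d+1:ℝ) + 1) = -(d:ℝ) := by ring
    rw [this]
    field_simp
  have hrpow : ∀ x ∈ Ioi r_h, (x:ℝ) ^ (d+1) = x ^ ((d:ℝ)+1) := by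
    intro x hx
    rw [show ((d:ℝ)+1) = ((d+1 : ℕ) : ℝ) by push_cast; ring, Real.rpow_natCast]
  have hxpos : ∀ x ∈ Ioi r_h, (0:ℝ) < x := fun x hx => hrh.trans hx
  -- the constant integrand
  have hconst_int : IntegrableOn (fun x => f0d / 2 * x ^ (-(d+1:ℝ))) (Ioi r_h) :=
    (integrableOn_Ioi_rpow_of_lt ha hrh).const_mul _
  -- continuity of the main integrand on Ici
  have hpowne : ∀ x ∈ Ici r_h, (x:ℝ) ^ (d+1) ≠ 0 := fun x hx =>
    pow_ne_zero _ (hrh.trans_le hx).ne'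
  have hFc : ContinuousOn (fun x => m x * Real.exp (-χ x / 2) / x ^ (d+1)) (Ici r_h) := by
    apply ContinuousOn.div
    · exact hmc.mul ((Real.continuous_exp.comp_continuousOn ((hχc.neg).div_const 2)))
    · exact (continuous_pow (d+1)).continuousOn
    · exact hpowne
  -- bound : |F x| ≤ f0d/2 * x^(-(d+1)) on Ioi
  have hbound : ∀ x ∈ Ioi r_h, m x * Real.exp (-χ x / 2) / x ^ (d+1)
      ≤ f0d / 2 * x ^ (-(d+1:ℝ)) ∧ 0 ≤ m x * Real.exp (-χ x / 2) / x ^ (d+1) := by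
    intro x hx
    have hxp := hxpos x hx
    have hple : m x * Real.exp (-χ x / 2) ≤ f0d / 2 := by
      have h1 := (hmb x (le_of_lt hx)).2
      have h2 := (hmb x (le_of_lt hx)).1
      have he1 : Real.exp (-χ x / 2) ≤ 1 := by
        rw [Real.exp_le_one_iff]
        have := hχn x (le_of_lt hx); linarith
      nlinarith [Real.exp_pos (-χ x / 2)]
    have hxr : x ^ (-(↑d + 1) : ℝ) = ((x:ℝ) ^ (d+1))⁻¹ := by
      rw [Real.rpow_neg hxp.le, show ((d:ℝ)+1) = ((d+1:ℕ):ℝ) by push_cast; ring,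
        Real.rpow_natCast]
    constructor
    · rw [hxr, div_eq_mul_inv]
      exact mul_le_mul_of_nonneg_right hple (by positivity)
    · have := (hmb x (le_of_lt hx)).1
      positivity
  have hFmeas : AEStronglyMeasurable (fun x => m x * Real.exp (-χ x / 2) / x ^ (d+1))
      (volume.restrict (Ioi r_h)) :=
    ((hFc.mono (Ioi_subset_Ici le_rfl)).aestronglyMeasurable measurableSet_Ioi)
  have hFint : IntegrableOn (fun x => m x * Real.exp (-χ x / 2) / x ^ (d+1)) (Ioi r_h) := by
    apply Integrable.mono' hconst_int hFmeas
    filter_upwards [ae_restrict_mem measurableSet_Ioi] with x hx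
    rw [Real.norm_eq_abs, abs_of_nonneg (hbound x hx).2]
    exact (hbound x hx).1
  -- value of the integral of constant part
  have hconst_val : ∫ x in Ioi r_h, f0d / 2 * x ^ (-(d+1:ℝ)) = 1 / (2 * d) := by
    rw [MeasureTheory.integral_const_mul, hint0, hsat]
    rw [Real.rpow_neg hrh.le, ← Real.rpow_natCast r_h d]
    field_simp
  -- value of the main integral
  have hF_val : ∫ x in Ioi r_h, m x * Real.exp (-χ x / 2) / x ^ (d+1) = 1 / (2 * d) := by
    have h2d : (2:ℝ) * d ≠ 0 := by positivity
    field_simp at hnorm ⊢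
    linarith [hnorm]
  -- the gap function
  set g : ℝ → ℝ := fun x => f0d / 2 * x ^ (-(d+1:ℝ)) - m x * Real.exp (-χ x / 2) / x ^ (d+1)
    with hg
  have hg_int : IntegrableOn g (Ioi r_h) := hconst_int.sub hFint
  have hg_nonneg : 0 ≤ᵐ[volume.restrict (Ioi r_h)] g := by
    filter_upwards [ae_restrict_mem measurableSet_Ioi] with x hx
    have := (hbound x hx).1
    simp only [hg, Pi.zero_apply]; linarith
  have hg_zero : ∫ x in Ioi r_h, g x = 0 := by
    rw [MeasureTheory.integral_sub hconst_int hFint, hconst_val, hF_val, sub_self]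
  have hg_ae : g =ᵐ[volume.restrict (Ioi r_h)] 0 := by
    rw [← MeasureTheory.integral_eq_zero_iff_of_nonneg_ae hg_nonneg hg_int]
    exact hg_zero
  -- upgrade to everywhere on Ici using continuity
  have hg_cont : ContinuousOn g (Ici r_h) := by
    apply ContinuousOn.sub
    · apply ContinuousOn.mul continuousOn_const
      exact ContinuousOn.rpow_const continuousOn_id
        (fun x hx => Or.inl (hrh.trans_le hx).ne')
    · exact hFc
  have hg_ae' : g =ᵐ[volume.restrict (Ici r_h)] 0 := by
    rwa [MeasureTheory.Measure.restrict_congr_set Ioi_ae_eq_Ici] at hg_ae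
  have hEq : EqOn g 0 (Ici r_h) := by
    apply MeasureTheory.Measure.eqOn_of_ae_eq hg_ae' hg_cont continuousOn_const
    rw [interior_Ici, closure_Ioi]
  -- now extract conclusions
  intro x hx
  have hxp : (0:ℝ) < x := hrh.trans_le hx
  have hgx : g x = 0 := hEq hx
  have hkey : m x * Real.exp (-χ x / 2) = f0d / 2 := by
    have hxr : x ^ (-(↑d + 1) : ℝ) = ((x:ℝ) ^ (d+1))⁻¹ := by
      rw [Real.rpow_neg hxp.le, show ((d:ℝ)+1) = ((d+1:ℕ):ℝ) by push_cast; ring,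
        Real.rpow_natCast]
    simp only [hg, hxr] at hgx
    rw [div_eq_mul_inv (m x * Real.exp (-χ x / 2)) ((x:ℝ) ^ (d+1))] at hgx
    have hpne : ((x:ℝ) ^ (d+1))⁻¹ ≠ 0 := inv_ne_zero (pow_ne_zero _ hxp.ne')
    have h2 : m x * Real.exp (-χ x / 2) * ((x:ℝ) ^ (d+1))⁻¹
        = f0d / 2 * ((x:ℝ) ^ (d+1))⁻¹ := by linarith
    exact mul_right_cancel₀ hpne h2
  have he1 : Real.exp (-χ x / 2) ≤ 1 := by
    rw [Real.exp_le_one_iff]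
    have := hχn x hx; linarith
  have hepos := Real.exp_pos (-χ x / 2)
  have hmle := (hmb x hx).2
  have heeq : Real.exp (-χ x / 2) = 1 := by
    by_contra hne
    have hlt : Real.exp (-χ x / 2) < 1 := lt_of_le_of_ne he1 hne
    nlinarith [(hmb x hx).1]
  have hχ0 : χ x = 0 := by
    have : -χ x / 2 = 0 := Real.exp_injective (by rw [heeq, Real.exp_zero])
    linarith
  refine ⟨?_, hχ0⟩
  rw [heeq, mul_one] at hkey
  exact hkey
end
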